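/- Let 0<p<∞, let m ≤ n be integers, and let f be a trigonometric polynomial of the form f(z) = Σ_{j=m}^{n} f̂(j) z^j. Then |f̂(m)| ≤ ‖f‖_{L^p} and |f̂(n)| ≤ ‖f‖_{L^p}. -/

import Mathlib

open scoped BigOperators
open Topology Filter Complex MeasureTheory intervalIntegral Metric Real Set


lemma mean_value_abs {f : ℂ → ℂ} (hf : DifferentiableOn ℂ f (closedBall 0 1)) :
    ‖f 0‖ ≤ (1 / (2 * Real.pi)) * ∫ t in (0:ℝ)..(2 * Real.pi),
      ‖f (Complex.exp (Complex.I * t))‖ := by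
  have h0 : (0:ℂ) ∈ ball (0:ℂ) 1 := by simp
  have hC := hf.circleIntegral_sub_inv_smul h0
  rw [smul_eq_mul] at hC
  have hcm : ∀ θ : ℝ, circleMap 0 1 θ = Complex.exp (Complex.I * θ) := by
    intro θ; simp [circleMap, mul_comm]
  have hne : ∀ θ : ℝ, circleMap 0 1 θ ≠ 0 := fun θ => circleMap_ne_center one_ne_zero
  have h1 : (∮ z in C(0, 1), (z - 0)⁻¹ • f z)
      = Complex.I * ∫ θ in (0:ℝ)..(2*Real.pi), f (circleMap 0 1 θ) := by
    rw [circleIntegral, ← intervalIntegral.integral_const_mul]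
    congr 1; ext θ
    rw [deriv_circleMap]
    field_simp [hne θ]
    rw [smul_eq_mul, smul_eq_mul, sub_zero, one_div, mul_comm (circleMap 0 1 θ) Complex.I,
      mul_assoc, mul_inv_cancel_left₀ (hne θ)]
  rw [h1] at hC
  have h2 : f 0 = (2 * Real.pi)⁻¹ * ∫ θ in (0:ℝ)..(2*Real.pi), f (circleMap 0 1 θ) := by
    have hπ : ((Real.pi:ℂ)) ≠ 0 := by exact_mod_cast Real.pi_ne_zero
    have hI : (∫ θ in (0:ℝ)..(2*Real.pi), f (circleMap 0 1 θ)) = 2 * (Real.pi:ℂ) * f 0 := by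
      apply mul_left_cancel₀ Complex.I_ne_zero; rw [hC]; ring
    rw [hI]; push_cast
    rw [← mul_assoc, inv_mul_cancel₀ (mul_ne_zero two_ne_zero hπ), one_mul]
  calc ‖f 0‖
      = (2 * Real.pi)⁻¹ * ‖∫ θ in (0:ℝ)..(2*Real.pi), f (circleMap 0 1 θ)‖ := by
        rw [h2, norm_mul, Complex.norm_real, Real.norm_eq_abs, _root_.abs_of_pos (by positivity)]
    _ ≤ (2 * Real.pi)⁻¹ * ∫ θ in (0:ℝ)..(2*Real.pi), ‖f (circleMap 0 1 θ)‖ := by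
        apply mul_le_mul_of_nonneg_left _ (by positivity)
        simpa using
          intervalIntegral.norm_integral_le_integral_norm
            (f := fun θ => f (circleMap 0 1 θ)) (a := 0) (b := 2*Real.pi) Real.two_pi_pos.le
    _ = (1 / (2 * Real.pi)) * ∫ t in (0:ℝ)..(2 * Real.pi),
          ‖f (Complex.exp (Complex.I * t))‖ := by
        rw [one_div]
        congr 1
        apply intervalIntegral.integral_congr
        intro θ _
        simp only [hcm]


lemma slit_of_small {w z : ℂ} (hw : ‖w‖ < 1) (hz : ‖z‖ ≤ 1) :
    1 - w * z ∈ Complex.slitPlane := by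
  rw [Complex.mem_slitPlane_iff]
  left
  have h1 : ‖w * z‖ < 1 := by
    rw [norm_mul]
    calc ‖w‖ * ‖z‖ ≤ ‖w‖ * 1 :=
      mul_le_mul_of_nonneg_left hz (norm_nonneg w)
    _ < 1 := by simpa using hw
  have h2 : (w * z).re ≤ ‖w * z‖ := Complex.re_le_norm _
  simp only [Complex.sub_re, Complex.one_re]
  linarith

lemma multiset_fact (p : ℝ) (s : Multiset ℂ) (hs : ∀ w ∈ s, ‖w‖ < 1) :
    DifferentiableOn ℂ (fun z => (s.map (fun w => (1 - w * z) ^ (p:ℂ))).prod)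
      (closedBall 0 1) ∧
    (∀ z : ℂ, ‖z‖ ≤ 1 →
      ‖(s.map (fun w => (1 - w * z) ^ (p:ℂ))).prod‖
        = (s.map (fun w => ‖1 - w * z‖ ^ p)).prod) := by
  induction s using Multiset.induction_on with
  | empty => simp [differentiableOn_const]
  | cons w t ih =>
    have hw : ‖w‖ < 1 := hs w (Multiset.mem_cons_self w t)
    have ht : ∀ u ∈ t, ‖u‖ < 1 := fun u hu => hs u (Multiset.mem_cons_of_mem hu)
    obtain ⟨ihd, iha⟩ := ih ht
    constructor
    · intro z hz
      simp only [Multiset.map_cons, Multiset.prod_cons]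
      apply DifferentiableWithinAt.mul _ (ihd z hz)
      apply DifferentiableAt.differentiableWithinAt
      apply DifferentiableAt.cpow _ (differentiableAt_const _)
      · exact slit_of_small hw (by simpa using mem_closedBall_zero_iff.mp hz)
      · exact (differentiableAt_const _).sub ((differentiableAt_const w).mul differentiableAt_id)
    · intro z hz
      simp only [Multiset.map_cons, Multiset.prod_cons, norm_mul, iha z hz]
      congr 1
      have hne : 1 - w * z ≠ 0 :=
        Complex.slitPlane_ne_zero (slit_of_small hw hz)
      rw [Complex.norm_cpow_of_ne_zero hne]
      simp


-- helper multiset lemmas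
lemma mprod_nonneg (s : Multiset ℂ) (f : ℂ → ℝ) (hf : ∀ r ∈ s, 0 ≤ f r) :
    0 ≤ (s.map f).prod := by
  apply Multiset.prod_nonneg
  intro x hx
  obtain ⟨r, hr, rfl⟩ := Multiset.mem_map.mp hx
  exact hf r hr

lemma mprod_le (s : Multiset ℂ) (f g : ℂ → ℝ) (hf : ∀ r ∈ s, 0 ≤ f r)
    (hle : ∀ r ∈ s, f r ≤ g r) : (s.map f).prod ≤ (s.map g).prod := by
  induction s using Multiset.induction_on with
  | empty => simp
  | cons a t ih =>
    simp only [Multiset.map_cons, Multiset.prod_cons]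
    have h1 : 0 ≤ f a := hf a (Multiset.mem_cons_self a t)
    have h2 : ∀ r ∈ t, 0 ≤ f r := fun r hr => hf r (Multiset.mem_cons_of_mem hr)
    apply mul_le_mul (hle a (Multiset.mem_cons_self a t)) (ih h2
      (fun r hr => hle r (Multiset.mem_cons_of_mem hr))) (mprod_nonneg t f h2)
      (le_trans h1 (hle a (Multiset.mem_cons_self a t)))

lemma mprod_rpow (s : Multiset ℂ) (f : ℂ → ℝ) (hf : ∀ r ∈ s, 0 ≤ f r) (p : ℝ) :
    (s.map f).prod ^ p = (s.map (fun r => f r ^ p)).prod := by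
  induction s using Multiset.induction_on with
  | empty => simp
  | cons a t ih =>
    simp only [Multiset.map_cons, Multiset.prod_cons]
    rw [Real.mul_rpow (hf a (Multiset.mem_cons_self a t))
      (mprod_nonneg t f (fun r hr => hf r (Multiset.mem_cons_of_mem hr))),
      ih (fun r hr => hf r (Multiset.mem_cons_of_mem hr))]

lemma mprod_abs (s : Multiset ℂ) (f : ℂ → ℂ) :
    ‖(s.map f).prod‖ = (s.map (fun r => ‖f r‖)).prod := by
  rw [show ‖(s.map f).prod‖ = (normHom : ℂ →*₀ ℝ) (s.map f).prod from rfl, map_multiset_prod,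
    Multiset.map_map]
  rfl


lemma abs_exp_I_mul (t : ℝ) : ‖Complex.exp (Complex.I * t)‖ = 1 := by
  rw [Complex.norm_exp]
  simp

lemma key0 (p : ℝ) (s : Multiset ℂ) (hs : ∀ w ∈ s, ‖w‖ < 1)
    (c : ℝ) (hc : 0 ≤ c) :
    c ≤ (1 / (2 * Real.pi)) * ∫ t in (0:ℝ)..(2 * Real.pi),
      c * (s.map (fun w => ‖1 - w * Complex.exp (Complex.I * t)‖ ^ p)).prod := by
  obtain ⟨hd, ha⟩ := multiset_fact p s hs
  set F : ℂ → ℂ := fun z => (c:ℂ) * (s.map (fun w => (1 - w * z) ^ (p:ℂ))).prod with hF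
  have hFd : DifferentiableOn ℂ F (closedBall 0 1) := (differentiableOn_const _).mul hd
  have habs : ∀ z : ℂ, ‖z‖ ≤ 1 → ‖F z‖
      = c * (s.map (fun w => ‖1 - w * z‖ ^ p)).prod := by
    intro z hz
    rw [hF]
    simp only [norm_mul, Complex.norm_real, Real.norm_eq_abs, _root_.abs_of_nonneg hc, ha z hz]
  have h0 : ‖F 0‖ = c := by
    rw [habs 0 (by simp)]
    have : (s.map (fun w => ‖1 - w * (0:ℂ)‖ ^ p)).prod = 1 := by
      rw [Multiset.prod_eq_one]
      intro x hx
      obtain ⟨w, _, rfl⟩ := Multiset.mem_map.mp hx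
      simp [Real.one_rpow]
    rw [this, mul_one]
  calc c = ‖F 0‖ := h0.symm
    _ ≤ (1 / (2 * Real.pi)) * ∫ t in (0:ℝ)..(2 * Real.pi),
          ‖F (Complex.exp (Complex.I * t))‖ := mean_value_abs hFd
    _ = _ := by
        congr 1
        apply intervalIntegral.integral_congr
        intro t _
        simp only [habs _ (le_of_eq (abs_exp_I_mul t))]


noncomputable def qf (r u : ℂ) : ℝ :=
  if 1 ≤ ‖r‖ then ‖u - r‖
  else ‖1 - (starRingEnd ℂ) r * u‖

lemma qf_nonneg (r u : ℂ) : 0 ≤ qf r u := by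
  unfold qf; split <;> exact norm_nonneg _

lemma qf_continuous (r : ℂ) : Continuous fun u => qf r u := by
  unfold qf; split <;> exact continuous_norm.comp (by fun_prop)

lemma qf_circle (r u : ℂ) (hu : ‖u‖ = 1) : qf r u = ‖u - r‖ := by
  unfold qf
  split
  · rfl
  · have h1 : u * (starRingEnd ℂ) u = 1 := by
      rw [Complex.mul_conj]
      norm_cast
      rw [← Complex.sq_norm, hu]; norm_num
    have h2 : 1 - (starRingEnd ℂ) r * u = (starRingEnd ℂ) ((starRingEnd ℂ) u * (u - r)) := by
      simp only [map_mul, map_sub, Complex.conj_conj]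
      linear_combination -h1
    rw [h2, Complex.norm_conj, norm_mul, Complex.norm_conj, hu, one_mul]

theorem key (p : ℝ) (hp : 0 < p) (g : Polynomial ℂ) :
    ‖g.eval 0‖ ^ p ≤ (1 / (2 * Real.pi)) * ∫ t in (0:ℝ)..(2 * Real.pi),
      ‖g.eval (Complex.exp (Complex.I * t))‖ ^ p := by
  rcases eq_or_ne g 0 with rfl | hg
  · simp [Real.zero_rpow hp.ne']
  set s := g.roots with hs
  set lc := g.leadingCoeff with hlc
  have heval : ∀ z : ℂ, g.eval z = lc * (s.map (fun r => z - r)).prod := by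
    intro z
    conv_lhs => rw [(IsAlgClosed.splits g).eq_prod_roots]
    rw [Polynomial.eval_mul, Polynomial.eval_C, Polynomial.eval_multiset_prod, Multiset.map_map]
    simp [Function.comp]
    rfl
  have habs_eval : ∀ z : ℂ, ‖g.eval z‖
      = ‖lc‖ * (s.map (fun r => ‖z - r‖)).prod := by
    intro z; rw [heval z, norm_mul, mprod_abs]
  set W : ℂ → ℝ := fun u => (‖lc‖ * (s.map (fun r => qf r u)).prod) ^ p with hW
  have hWcont : Continuous W := by
    apply Continuous.rpow_const
    · exact continuous_const.mul (continuous_multiset_prod s (fun r _ => qf_continuous r))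
    · exact fun u => Or.inr hp.le
  -- Step 1 : the inequality at radius ρ < 1
  have hS1 : ∀ ρ : ℝ, ρ ∈ Ioo (0:ℝ) 1 → ‖g.eval 0‖ ^ p ≤
      (1 / (2 * Real.pi)) * ∫ t in (0:ℝ)..(2 * Real.pi),
        W ((ρ:ℂ) * Complex.exp (Complex.I * t)) := by
    rintro ρ ⟨hρ0, hρ1⟩
    set ws : ℂ → ℂ := fun r => if 1 ≤ ‖r‖ then (ρ:ℂ) / r
      else (starRingEnd ℂ) r * (ρ:ℂ) with hws
    set mv : ℂ → ℝ := fun r => if 1 ≤ ‖r‖ then ‖r‖ else 1 with hmv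
    have hmv0 : ∀ r ∈ s, 0 ≤ mv r := by
      intro r _; rw [hmv]; dsimp only; split
      exacts [norm_nonneg r, zero_le_one]
    have hws1 : ∀ w ∈ s.map ws, ‖w‖ < 1 := by
      intro w hw
      obtain ⟨r, hr, rfl⟩ := Multiset.mem_map.mp hw
      rw [hws]; dsimp only
      split
      next h =>
        rw [norm_div, Complex.norm_real, Real.norm_eq_abs, _root_.abs_of_pos hρ0]
        rw [div_lt_one (lt_of_lt_of_le one_pos h)]
        exact lt_of_lt_of_le hρ1 h
      next h =>
        push_neg at h
        rw [norm_mul, Complex.norm_conj, Complex.norm_real, Real.norm_eq_abs, _root_.abs_of_pos hρ0]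
        calc ‖r‖ * ρ ≤ 1 * ρ :=
          mul_le_mul_of_nonneg_right h.le hρ0.le
        _ < 1 := by simpa using hρ1
    set c : ℝ := (‖lc‖ * (s.map mv).prod) ^ p with hc
    have hcn : 0 ≤ ‖lc‖ * (s.map mv).prod :=
      mul_nonneg (norm_nonneg _) (mprod_nonneg s mv hmv0)
    have hkey0 := key0 p (s.map ws) hws1 c (Real.rpow_nonneg hcn p)
    have hi : ‖g.eval 0‖ ^ p ≤ c := by
      rw [hc]
      apply Real.rpow_le_rpow (norm_nonneg _) _ hp.le
      rw [habs_eval 0]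
      apply mul_le_mul_of_nonneg_left _ (norm_nonneg lc)
      apply mprod_le s _ mv (fun r _ => norm_nonneg _)
      intro r hr
      have h0r : ‖0 - r‖ = ‖r‖ := by simp
      rw [h0r, hmv]; dsimp only
      split
      next h => exact le_refl _
      next h => exact (not_le.mp h).le
    have hii : ∀ t : ℝ, c * ((s.map ws).map
        (fun w => ‖1 - w * Complex.exp (Complex.I * t)‖ ^ p)).prod
        = W ((ρ:ℂ) * Complex.exp (Complex.I * t)) := by
      intro t
      set e := Complex.exp (Complex.I * t) with he
      rw [Multiset.map_map, hc, hW]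
      simp only [Function.comp_def]
      rw [← mprod_rpow s (fun r => ‖1 - ws r * e‖)
        (fun r _ => norm_nonneg _) p,
        ← Real.mul_rpow hcn (mprod_nonneg s _ (fun r _ => norm_nonneg _))]
      congr 1
      rw [mul_assoc, ← Multiset.prod_map_mul]
      refine congrArg _ (congrArg Multiset.prod (Multiset.map_congr rfl ?_))
      intro r hr
      rw [hmv, hws]; unfold qf; dsimp only
      split
      next h =>
        have hr0 : r ≠ 0 := by
          intro h0; rw [h0] at h; simp at h; norm_num at h
        rw [← norm_mul]
        have : r * (1 - (ρ:ℂ) / r * e) = -((ρ:ℂ) * e - r) := by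
          field_simp
          ring
        rw [this, norm_neg]
      next h =>
        rw [one_mul, mul_assoc]
    calc ‖g.eval 0‖ ^ p ≤ c := hi
      _ ≤ (1 / (2 * Real.pi)) * ∫ t in (0:ℝ)..(2 * Real.pi),
            c * ((s.map ws).map (fun w =>
              ‖1 - w * Complex.exp (Complex.I * t)‖ ^ p)).prod := hkey0
      _ = _ := by
          congr 1
          exact intervalIntegral.integral_congr (fun t _ => hii t)
  -- Step 2 : continuity in ρ
  have hcont : Continuous (fun ρ : ℝ => ∫ t in (0:ℝ)..(2 * Real.pi),
      W ((ρ:ℂ) * Complex.exp (Complex.I * t))) := by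
    apply intervalIntegral.continuous_parametric_intervalIntegral_of_continuous'
    apply hWcont.comp
    apply Continuous.mul
    · exact Complex.continuous_ofReal.comp continuous_fst
    · exact Complex.continuous_exp.comp (continuous_const.mul
        (Complex.continuous_ofReal.comp continuous_snd))
  -- Step 3 : pass to the limit ρ → 1
  have hne : (𝓝[Ioo (0:ℝ) 1] (1:ℝ)).NeBot := by
    apply mem_closure_iff_nhdsWithin_neBot.mp
    rw [closure_Ioo one_ne_zero.symm]
    exact ⟨zero_le_one, le_refl 1⟩
  have hlim : Filter.Tendsto (fun ρ : ℝ => (1 / (2 * Real.pi)) * ∫ t in (0:ℝ)..(2 * Real.pi),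
      W ((ρ:ℂ) * Complex.exp (Complex.I * t))) (𝓝[Ioo (0:ℝ) 1] 1)
      (𝓝 ((1 / (2 * Real.pi)) * ∫ t in (0:ℝ)..(2 * Real.pi),
        W (((1:ℝ):ℂ) * Complex.exp (Complex.I * t)))) :=
    ((continuous_const.mul hcont).tendsto 1).mono_left nhdsWithin_le_nhds
  have hfin := ge_of_tendsto hlim (eventually_nhdsWithin_of_forall hS1)
  refine le_trans hfin (le_of_eq ?_)
  congr 1
  apply intervalIntegral.integral_congr
  intro t _
  have h1 : (((1:ℝ):ℂ) * Complex.exp (Complex.I * t)) = Complex.exp (Complex.I * t) := by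
    simp
  dsimp only
  rw [h1, hW]
  dsimp only
  rw [habs_eval]
  congr 2
  exact congrArg Multiset.prod
    (Multiset.map_congr rfl (fun r hr => qf_circle r _ (abs_exp_I_mul t)))

/-- The `L^p` quasinorm `((1/2π) ∫₀^{2π} |f(e^{it})|^p dt)^{1/p}` of a function on
the unit circle, given as `t ↦ f(e^{it})`. -/
noncomputable def trigLp (p : ℝ) (f : ℝ → ℂ) : ℝ :=
  ((1 / (2 * Real.pi)) * ∫ t in (0:ℝ)..(2 * Real.pi), ‖f t‖ ^ p) ^ (1 / p)



-- reindexing lemmas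
lemma sum_Icc_up (m n : ℤ) (hmn : m ≤ n) (F : ℤ → ℂ) :
    ∑ j ∈ Finset.Icc m n, F j = ∑ k ∈ Finset.range ((n - m).toNat + 1), F (m + k) := by
  apply Finset.sum_bij' (i := fun j _ => (j - m).toNat) (j := fun k _ => m + (k:ℤ))
  · intro j hj
    rw [Finset.mem_Icc] at hj
    rw [Finset.mem_range]
    omega
  · intro k hk
    rw [Finset.mem_range] at hk
    rw [Finset.mem_Icc]
    omega
  · intro j hj
    rw [Finset.mem_Icc] at hj
    omega
  · intro k hk
    rw [Finset.mem_range] at hk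
    omega
  · intro j hj
    rw [Finset.mem_Icc] at hj
    congr 1
    omega

lemma sum_Icc_down (m n : ℤ) (hmn : m ≤ n) (F : ℤ → ℂ) :
    ∑ j ∈ Finset.Icc m n, F j = ∑ k ∈ Finset.range ((n - m).toNat + 1), F (n - k) := by
  apply Finset.sum_bij' (i := fun j _ => (n - j).toNat) (j := fun k _ => n - (k:ℤ))
  · intro j hj
    rw [Finset.mem_Icc] at hj
    rw [Finset.mem_range]
    omega
  · intro k hk
    rw [Finset.mem_range] at hk
    rw [Finset.mem_Icc]
    omega
  · intro j hj
    rw [Finset.mem_Icc] at hj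
    omega
  · intro k hk
    rw [Finset.mem_range] at hk
    omega
  · intro j hj
    rw [Finset.mem_Icc] at hj
    congr 1
    omega


lemma reduce_to_key (p : ℝ) (hp : 0 < p) (f : ℝ → ℂ) (g : Polynomial ℂ)
    (h : (∫ t in (0:ℝ)..(2 * Real.pi), ‖f t‖ ^ p)
      = ∫ t in (0:ℝ)..(2 * Real.pi),
          ‖g.eval (Complex.exp (Complex.I * t))‖ ^ p) :
    ‖g.eval 0‖ ≤ trigLp p f := by
  have h1 : ‖g.eval 0‖ ^ p ≤ (1 / (2 * Real.pi)) *
      ∫ t in (0:ℝ)..(2 * Real.pi), ‖f t‖ ^ p := by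
    rw [h]; exact key p hp g
  have h2 := Real.rpow_le_rpow (Real.rpow_nonneg (norm_nonneg _) p) h1
    (le_of_lt (by positivity) : (0:ℝ) ≤ 1/p)
  rw [← Real.rpow_mul (norm_nonneg _), mul_one_div, div_self hp.ne',
    Real.rpow_one] at h2
  exact h2

lemma eval_poly_sum (b : ℕ → ℂ) (N : ℕ) (z : ℂ) :
    (∑ k ∈ Finset.range (N + 1), Polynomial.C (b k) * Polynomial.X ^ k).eval z
      = ∑ k ∈ Finset.range (N + 1), b k * z ^ k := by
  rw [Polynomial.eval_finset_sum]
  simp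

lemma eval_poly_sum_zero (b : ℕ → ℂ) (N : ℕ) :
    (∑ k ∈ Finset.range (N + 1), Polynomial.C (b k) * Polynomial.X ^ k).eval 0 = b 0 := by
  rw [eval_poly_sum]
  rw [Finset.sum_eq_single_of_mem 0 (Finset.mem_range.mpr (Nat.succ_pos N))]
  · simp
  · intro k _ hk
    simp [zero_pow hk]

theorem first_and_last_coefficient_estimate (p : ℝ) (hp : 0 < p)
    (m n : ℤ) (hmn : m ≤ n) (a : ℤ → ℂ) :
    ‖a m‖ ≤ trigLp p (fun t => ∑ j ∈ Finset.Icc m n,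
        a j * Complex.exp (Complex.I * (j : ℂ) * (t : ℂ))) ∧
    ‖a n‖ ≤ trigLp p (fun t => ∑ j ∈ Finset.Icc m n,
        a j * Complex.exp (Complex.I * (j : ℂ) * (t : ℂ))) := by
  set N := (n - m).toNat with hN
  set f : ℝ → ℂ := fun t => ∑ j ∈ Finset.Icc m n,
    a j * Complex.exp (Complex.I * (j : ℂ) * (t : ℂ)) with hf
  constructor
  · -- first coefficient
    set g : Polynomial ℂ := ∑ k ∈ Finset.range (N + 1),
      Polynomial.C (a (m + k)) * Polynomial.X ^ k with hg
    have hg0 : g.eval 0 = a m := by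
      rw [hg, eval_poly_sum_zero]; norm_num
    have hpt : ∀ t : ℝ, ‖f t‖
        = ‖g.eval (Complex.exp (Complex.I * t))‖ := by
      intro t
      have : f t = Complex.exp (Complex.I * m * t) * g.eval (Complex.exp (Complex.I * t)) := by
        rw [hf, hg]
        dsimp only
        rw [eval_poly_sum, Finset.mul_sum, sum_Icc_up m n hmn]
        apply Finset.sum_congr rfl
        intro k _
        have he : Complex.exp (Complex.I * ((m + k : ℤ) : ℂ) * t)
            = Complex.exp (Complex.I * m * t) * Complex.exp (Complex.I * t) ^ k := by
          rw [← Complex.exp_nat_mul, ← Complex.exp_add]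
          congr 1
          push_cast
          ring
        rw [he]
        ring
      rw [this, norm_mul]
      have : Complex.I * m * t = Complex.I * ((m * t : ℝ) : ℂ) := by push_cast; ring
      rw [this, abs_exp_I_mul, one_mul]
    rw [← hg0]
    apply reduce_to_key p hp f g
    exact intervalIntegral.integral_congr (fun t _ => by rw [hpt t])
  · -- last coefficient
    set g : Polynomial ℂ := ∑ k ∈ Finset.range (N + 1),
      Polynomial.C (a (n - k)) * Polynomial.X ^ k with hg
    have hg0 : g.eval 0 = a n := by
      rw [hg, eval_poly_sum_zero]; norm_num
    have hpt : ∀ t : ℝ, ‖f t‖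
        = ‖g.eval (Complex.exp (Complex.I * ((2 * Real.pi - t : ℝ) : ℂ)))‖ := by
      intro t
      have hexp : Complex.exp (Complex.I * ((2 * Real.pi - t : ℝ) : ℂ))
          = Complex.exp (-(Complex.I * t)) := by
        push_cast
        rw [show Complex.I * (2 * Real.pi - t) = 2 * Real.pi * Complex.I + -(Complex.I * t)
          by ring, Complex.exp_add, Complex.exp_two_pi_mul_I, one_mul]
      have : f t = Complex.exp (Complex.I * n * t)
          * g.eval (Complex.exp (-(Complex.I * t))) := by
        rw [hf, hg]
        dsimp only
        rw [eval_poly_sum, Finset.mul_sum, sum_Icc_down m n hmn]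
        apply Finset.sum_congr rfl
        intro k _
        have he : Complex.exp (Complex.I * ((n - k : ℤ) : ℂ) * t)
            = Complex.exp (Complex.I * n * t) * Complex.exp (-(Complex.I * t)) ^ k := by
          rw [← Complex.exp_nat_mul, ← Complex.exp_add]
          congr 1
          push_cast
          ring
        rw [he]
        ring
      rw [this, norm_mul, hexp]
      have h2 : Complex.I * n * t = Complex.I * ((n * t : ℝ) : ℂ) := by push_cast; ring
      rw [h2, abs_exp_I_mul, one_mul]
    rw [← hg0]
    apply reduce_to_key p hp f g
    calc (∫ t in (0:ℝ)..(2 * Real.pi), ‖f t‖ ^ p)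
        = ∫ t in (0:ℝ)..(2 * Real.pi), 
            ‖g.eval (Complex.exp (Complex.I * ((2 * Real.pi - t : ℝ) : ℂ)))‖ ^ p := by
          apply intervalIntegral.integral_congr
          intro t _
          dsimp only
          rw [hpt t]
      _ = ∫ x in (2 * Real.pi - 2 * Real.pi)..(2 * Real.pi - 0), 
            ‖g.eval (Complex.exp (Complex.I * (x : ℝ) : ℂ))‖ ^ p :=
          intervalIntegral.integral_comp_sub_left
            (fun x : ℝ => ‖g.eval (Complex.exp (Complex.I * (x : ℝ) : ℂ))‖ ^ p)
            (2 * Real.pi)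
      _ = _ := by norm_num
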